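/- Define E(j,m) for 0 ≤ j, 0 ≤ m ≤ k-1 by E(0,m) = 0 for m ≠ k-1, E(0,k-1) = 1, and E(j,m) = (m+1)·E(j-1,m) + E(j-1,m+1) (with E(j-1,k) interpreted as 0). Then E(j,m) equals the number of sequences (x_1,...,x_j) with entries in {0,...,k-1} such that appending them to any restricted-growth prefix with maximum m yields a surjective restricted growth function; in particular E(n-1, 0) = S(n,k), the Stirling number of the second kind. -/

import Mathlib

open Finset


/-- `stirling n k` is the number of set partitions of an `n`-element set into
`k` nonempty blocks (the Stirling number of the second kind). -/
noncomputable def stirling (n k : ℕ) : ℕ :=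
  Nat.card {P : Finpartition (Finset.univ : Finset (Fin n)) // P.parts.card = k}

/-- The array `E(j,m)`: `E(0,m) = [m = k-1]` and
`E(j,m) = (m+1)·E(j-1,m) + E(j-1,m+1)`. -/
def E (k : ℕ) : ℕ → ℕ → ℕ
  | 0, m => if m = k - 1 then 1 else 0
  | j + 1, m => (m + 1) * E k j m + E k j (m + 1)

lemma sup_filter_succ {j : ℕ} (a : ℕ) (y : Fin j → ℕ) (i : Fin j) :
    (univ.filter fun j' => j' < Fin.succ i).sup (Fin.cons a y) =
      max a ((univ.filter fun j' => j' < i).sup y) := by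
  apply le_antisymm
  · apply Finset.sup_le
    intro b hb
    rw [mem_filter] at hb
    induction b using Fin.cases with
    | zero => simp [Fin.cons]
    | succ t =>
        have ht : t < i := by
          simpa [Fin.succ_lt_succ_iff] using hb.2
        simp only [Fin.cons_succ]
        exact le_max_of_le_right (Finset.le_sup (by simp [mem_filter, ht]))
  · apply max_le
    · have : (0 : Fin (j+1)) ∈ univ.filter fun j' => j' < Fin.succ i := by
        simp [Fin.succ_pos]
      simpa using Finset.le_sup (f := Fin.cons a y) this
    · apply Finset.sup_le
      intro t ht
      rw [mem_filter] at ht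
      have : Fin.succ t ∈ univ.filter fun j' => j' < Fin.succ i := by
        simp [Fin.succ_lt_succ_iff, ht.2]
      simpa using Finset.le_sup (f := Fin.cons a y) this

lemma sup_univ_cons {j : ℕ} (a : ℕ) (y : Fin j → ℕ) :
    (univ : Finset (Fin (j+1))).sup (Fin.cons a y) = max a (univ.sup y) := by
  apply le_antisymm
  · apply Finset.sup_le
    intro b _
    induction b using Fin.cases with
    | zero => simp [Fin.cons]
    | succ t =>
        simp only [Fin.cons_succ]
        exact le_max_of_le_right (Finset.le_sup (mem_univ t))
  · apply max_le
    · simpa using Finset.le_sup (f := Fin.cons a y) (mem_univ (0 : Fin (j+1)))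
    · apply Finset.sup_le
      intro t _
      simpa using Finset.le_sup (f := Fin.cons a y) (mem_univ (Fin.succ t))

lemma sup_filter_zero {j : ℕ} (x : Fin (j+1) → ℕ) :
    (univ.filter fun j' => j' < (0 : Fin (j+1))).sup x = 0 := by
  simp [Fin.not_lt_zero]

/-- The extension condition. -/
def Cond (k m : ℕ) {j : ℕ} (x : Fin j → ℕ) : Prop :=
  (∀ i : Fin j, x i ≤ 1 + max m ((Finset.univ.filter fun j' => j' < i).sup x)) ∧
    max m (Finset.univ.sup x) = k - 1

lemma cond_bound {k m j : ℕ} {x : Fin j → ℕ} (h : Cond k m x) :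
    ∀ i : Fin j, x i ≤ m + i + 1 := by
  have key : ∀ v : ℕ, ∀ i : Fin j, i.val = v → x i ≤ m + i.val + 1 := by
    intro v
    induction v using Nat.strong_induction_on with
    | _ v ih =>
      intro i hi
      have hsup : (Finset.univ.filter fun j' => j' < i).sup x ≤ m + i.val := by
        apply Finset.sup_le
        intro b hb
        rw [mem_filter] at hb
        have hb2 : b.val < i.val := hb.2
        have := ih b.val (hi ▸ hb2) b rfl
        omega
      have h1 := h.1 i
      have hm : max m ((Finset.univ.filter fun j' => j' < i).sup x) ≤ m + i.val :=
        max_le (Nat.le_add_right _ _) hsup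
      omega
  exact fun i => key i.val i rfl

lemma cond_finite (k m j : ℕ) : Finite {x : Fin j → ℕ // Cond k m x} := by
  apply Finite.of_injective
    (fun x => (fun i => (⟨x.1 i, by
      have := cond_bound x.2 i
      have : i.val < j := i.isLt
      omega⟩ : Fin (m + j + 1)) : Fin j → Fin (m + j + 1)))
  intro x y hxy
  apply Subtype.ext
  funext i
  exact congrArg Fin.val (congrFun hxy i)

lemma card_sigma_nat {ι : Type*} [Fintype ι] (F : ι → Type*) [∀ i, Finite (F i)] :
    Nat.card (Σ i, F i) = ∑ i, Nat.card (F i) := by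
  letI : ∀ i, Fintype (F i) := fun i => Fintype.ofFinite _
  simp [Nat.card_eq_fintype_card, Fintype.card_sigma]

lemma cond_cons {k m j : ℕ} (a : ℕ) (ha : a ≤ m + 1) (y : Fin j → ℕ)
    (hy : Cond k (max m a) y) : Cond k m (Fin.cons a y) := by
  constructor
  · intro i
    induction i using Fin.cases with
    | zero =>
        simp only [Fin.cons_zero]
        have : m ≤ max m ((Finset.univ.filter fun j' => j' < (0 : Fin (j+1))).sup (Fin.cons a y)) :=
          le_max_left _ _
        omega
    | succ t =>
        rw [Fin.cons_succ, sup_filter_succ, ← max_assoc]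
        exact hy.1 t
  · rw [sup_univ_cons, ← max_assoc]
    exact hy.2

lemma cond_tail {k m j : ℕ} {x : Fin (j+1) → ℕ} (hx : Cond k m x) :
    Cond k (max m (x 0)) (Fin.tail x) := by
  have hx' : x = Fin.cons (x 0) (Fin.tail x) := (Fin.cons_self_tail x).symm
  constructor
  · intro i
    rw [max_assoc, ← sup_filter_succ (x 0) (Fin.tail x) i, ← hx']
    exact hx.1 i.succ
  · rw [max_assoc, ← sup_univ_cons (x 0) (Fin.tail x), ← hx']
    exact hx.2

lemma cond_zero_le {k m j : ℕ} {x : Fin (j+1) → ℕ} (hx : Cond k m x) : x 0 ≤ m + 1 := by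
  have h := hx.1 0
  rw [sup_filter_zero] at h
  have : max m 0 = m := Nat.max_eq_left (Nat.zero_le m)
  omega

lemma card_cond_succ (k m j : ℕ) :
    Nat.card {x : Fin (j+1) → ℕ // Cond k m x} =
      ∑ a : Fin (m+2), Nat.card {y : Fin j → ℕ // Cond k (max m a.val) y} := by
  haveI : ∀ a : Fin (m+2), Finite {y : Fin j → ℕ // Cond k (max m a.val) y} :=
    fun a => cond_finite _ _ _
  rw [← card_sigma_nat]
  apply (Nat.card_eq_of_bijective
    (fun p : Σ a : Fin (m+2), {y : Fin j → ℕ // Cond k (max m a.val) y} =>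
      (⟨Fin.cons p.1.val p.2.1, cond_cons p.1.val (by omega) p.2.1 p.2.2⟩ :
        {x : Fin (j+1) → ℕ // Cond k m x})) ?_).symm
  constructor
  · rintro ⟨a, y, hy⟩ ⟨a', y', hy'⟩ h
    have h1 := congrArg Subtype.val h
    dsimp at h1
    have ha : a = a' := by
      have := congrFun h1 0
      simpa [Fin.ext_iff] using this
    subst ha
    have hyy : y = y' := by
      funext t
      have := congrFun h1 t.succ
      simpa using this
    subst hyy
    rfl
  · rintro ⟨x, hx⟩
    refine ⟨⟨⟨x 0, by have := cond_zero_le hx; omega⟩, ⟨Fin.tail x, cond_tail hx⟩⟩, ?_⟩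
    exact Subtype.ext (Fin.cons_self_tail x)

lemma card_cond (k : ℕ) (j m : ℕ) :
    Nat.card {x : Fin j → ℕ // Cond k m x} = E k j m := by
  induction j generalizing m with
  | zero =>
      have hsup : (Finset.univ : Finset (Fin 0)).sup = fun _ => (0 : ℕ) := by
        funext x
        simp
      by_cases hm : m = k - 1
      · haveI : Unique {x : Fin 0 → ℕ // Cond k m x} := by
          refine ⟨⟨⟨fun i => i.elim0, ?_, ?_⟩⟩, ?_⟩
          · intro i; exact i.elim0
          · simp [hm]
          · rintro ⟨x, hx⟩
            apply Subtype.ext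
            funext i
            exact i.elim0
        rw [Nat.card_unique]
        simp [E, hm]
      · haveI : IsEmpty {x : Fin 0 → ℕ // Cond k m x} := by
          constructor
          rintro ⟨x, hx⟩
          have := hx.2
          simp at this
          exact hm this
        rw [Nat.card_of_isEmpty]
        simp [E, hm]
  | succ j ih =>
      rw [card_cond_succ, show E k (j+1) m = (m + 1) * E k j m + E k j (m+1) from rfl]
      rw [Fin.sum_univ_castSucc]
      have h1 : ∀ a : Fin (m+1), max m ((Fin.castSucc a).val) = m := by
        intro a
        rw [Fin.coe_castSucc]
        exact Nat.max_eq_left (by have := a.isLt; omega)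
      have h2 : max m ((Fin.last (m+1)).val) = m + 1 := Nat.max_eq_right (by simp [Fin.last])
      simp only [h2, ih]
      simp only [h1]
      simp [mul_comm]

section PartSide
variable {n k : ℕ} (P : Finpartition (univ : Finset (Fin (n+1))))

/-- rank of a part: number of parts with smaller minimum -/
def prank (p : Finset (Fin (n+1))) : ℕ := (P.parts.filter fun q => q.min < p.min).card

lemma min_inj {p q : Finset (Fin (n+1))} (hp : p ∈ P.parts) (hq : q ∈ P.parts)
    (h : p.min = q.min) : p = q := by
  have hpn := P.nonempty_of_mem_parts hp
  have hqn := P.nonempty_of_mem_parts hq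
  have h1 : (↑(p.min' hpn) : WithTop (Fin (n+1))) = ↑(q.min' hqn) := by
    rw [Finset.coe_min', Finset.coe_min', h]
  have h2 : p.min' hpn = q.min' hqn := by exact_mod_cast h1
  exact P.eq_of_mem_parts hp hq (Finset.min'_mem p hpn) (h2 ▸ Finset.min'_mem q hqn)

lemma prank_lt_prank {p q : Finset (Fin (n+1))} (hp : p ∈ P.parts) (hq : q ∈ P.parts)
    (h : p.min < q.min) : prank P p < prank P q := by
  apply Finset.card_lt_card
  constructor
  · intro r hr
    rw [mem_filter] at hr ⊢
    exact ⟨hr.1, lt_trans hr.2 h⟩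
  · intro hsub
    have : p ∈ P.parts.filter fun q' => q'.min < q.min := by
      rw [mem_filter]; exact ⟨hp, h⟩
    have := hsub this
    rw [mem_filter] at this
    exact lt_irrefl _ this.2

lemma prank_inj {p q : Finset (Fin (n+1))} (hp : p ∈ P.parts) (hq : q ∈ P.parts)
    (h : prank P p = prank P q) : p = q := by
  rcases lt_trichotomy p.min q.min with hlt | heq | hgt
  · exact absurd h (Nat.ne_of_lt (prank_lt_prank P hp hq hlt))
  · exact min_inj P hp hq heq
  · exact absurd h.symm (Nat.ne_of_lt (prank_lt_prank P hq hp hgt))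

lemma prank_lt_k (hP : P.parts.card = k) (hk : 1 ≤ k) {p : Finset (Fin (n+1))}
    (hp : p ∈ P.parts) : prank P p < k := by
  have hsub : (P.parts.filter fun q => q.min < p.min) ⊆ P.parts.erase p := by
    intro r hr
    rw [mem_filter] at hr
    rw [Finset.mem_erase]
    refine ⟨?_, hr.1⟩
    rintro rfl
    exact lt_irrefl _ hr.2
  have := Finset.card_le_card hsub
  rw [Finset.card_erase_of_mem hp, hP] at this
  unfold prank
  omega

lemma prank_surj (hP : P.parts.card = k) (hk : 1 ≤ k) :
    ∀ c < k, ∃ p ∈ P.parts, prank P p = c := by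
  have himg : P.parts.image (prank P) = range k := by
    apply Finset.eq_of_subset_of_card_le
    · intro c hc
      rw [Finset.mem_image] at hc
      obtain ⟨p, hp, rfl⟩ := hc
      rw [Finset.mem_range]
      exact prank_lt_k P hP hk hp
    · rw [Finset.card_range, Finset.card_image_of_injOn, hP]
      intro p hp q hq h
      exact prank_inj P hp hq h
  intro c hc
  have : c ∈ P.parts.image (prank P) := by rw [himg, Finset.mem_range]; exact hc
  rw [Finset.mem_image] at this
  obtain ⟨p, hp, h⟩ := this
  exact Exists.intro p ⟨hp, h⟩

def pf : Fin (n+1) → ℕ := fun i => prank P (P.part i)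

lemma part_mem' (i : Fin (n+1)) : P.part i ∈ P.parts := P.part_mem.mpr (mem_univ i)
lemma mem_part' (i : Fin (n+1)) : i ∈ P.part i := P.mem_part (mem_univ i)

lemma pf_zero : pf P 0 = 0 := by
  unfold pf prank
  rw [Finset.card_eq_zero, Finset.filter_eq_empty_iff]
  intro q hq
  have hqn := P.nonempty_of_mem_parts hq
  have h1 : (↑(q.min' hqn) : WithTop (Fin (n+1))) = q.min := Finset.coe_min' hqn
  have h2 : (P.part 0).min ≤ (0 : Fin (n+1)) := Finset.min_le (P.mem_part (mem_univ 0))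
  intro hlt
  have : q.min < ((0 : Fin (n+1)) : WithTop (Fin (n+1))) := lt_of_lt_of_le hlt h2
  rw [← h1] at this
  have : q.min' hqn < 0 := by exact_mod_cast this
  exact absurd this (Fin.not_lt_zero _)

lemma pf_ker {i j : Fin (n+1)} : pf P i = pf P j ↔ P.part i = P.part j := by
  constructor
  · intro h
    exact prank_inj P (part_mem' P i) (part_mem' P j) h
  · intro h
    unfold pf
    rw [h]

lemma pf_le (hP : P.parts.card = k) (hk : 1 ≤ k) (i : Fin (n+1)) : pf P i ≤ k - 1 := by
  have := prank_lt_k P hP hk (part_mem' P i)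
  unfold pf
  omega

lemma pf_sup (hP : P.parts.card = k) (hk : 1 ≤ k) :
    (univ : Finset (Fin (n+1))).sup (pf P) = k - 1 := by
  apply le_antisymm
  · exact Finset.sup_le fun i _ => pf_le P hP hk i
  · obtain ⟨p, hp, hrk⟩ := prank_surj P hP hk (k-1) (by omega)
    obtain ⟨a, ha⟩ := P.nonempty_of_mem_parts hp
    have : pf P a = k - 1 := by
      unfold pf
      rw [P.part_eq_of_mem hp ha]
      exact hrk
    calc k - 1 = pf P a := this.symm
    _ ≤ _ := Finset.le_sup (mem_univ a)

lemma pf_grow (hP : P.parts.card = k) (hk : 1 ≤ k) (i : Fin (n+1)) :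
    pf P i ≤ 1 + (univ.filter fun j' => j' < i).sup (pf P) := by
  have hdef : pf P i = prank P (P.part i) := rfl
  by_cases h0 : pf P i = 0
  · omega
  · set c := pf P i - 1 with hc
    have hck : c < k := by
      have := prank_lt_k P hP hk (part_mem' P i)
      omega
    obtain ⟨q, hq, hrk⟩ := prank_surj P hP hk c hck
    have hqlt : q.min < (P.part i).min := by
      rcases lt_trichotomy q.min (P.part i).min with hlt | heq | hgt
      · exact hlt
      · exfalso
        have h1 : q = P.part i := min_inj P hq (part_mem' P i) heq
        rw [h1] at hrk
        omega
      · exfalso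
        have := prank_lt_prank P (part_mem' P i) hq hgt
        omega
    have hqn := P.nonempty_of_mem_parts hq
    set j := q.min' hqn with hj
    have hji : j < i := by
      have h1 : (↑j : WithTop (Fin (n+1))) = q.min := Finset.coe_min' hqn
      have h2 : (P.part i).min ≤ (↑i : WithTop (Fin (n+1))) := Finset.min_le (mem_part' P i)
      have : (↑j : WithTop (Fin (n+1))) < ↑i := lt_of_lt_of_le (h1 ▸ hqlt) h2
      exact_mod_cast this
    have hfj : pf P j = c := by
      have : pf P j = prank P (P.part j) := rfl
      rw [this, P.part_eq_of_mem hq (Finset.min'_mem q hqn)]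
      exact hrk
    have hle : pf P j ≤ (univ.filter fun j' => j' < i).sup (pf P) :=
      Finset.le_sup (by rw [mem_filter]; exact ⟨mem_univ j, hji⟩)
    omega

end PartSide

noncomputable instance dker {n : ℕ} (f : Fin n → ℕ) : DecidableRel ⇑(Setoid.ker f) :=
  fun a b => decEq (f a) (f b)

def fiber {n : ℕ} (f : Fin n → ℕ) (c : ℕ) : Finset (Fin n) := univ.filter fun b => f b = c

lemma mem_fiber {n : ℕ} (f : Fin n → ℕ) (c : ℕ) (b : Fin n) :
    b ∈ fiber f c ↔ f b = c := by simp [fiber]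

lemma ker_parts {n : ℕ} (f : Fin (n+1) → ℕ) :
    (Finpartition.ofSetoid (Setoid.ker f)).parts
      = univ.image fun a => ({b | f a = f b} : Finset (Fin (n+1))) := rfl

lemma mem_ker_class {n : ℕ} (f : Fin (n+1) → ℕ) (a b : Fin (n+1)) :
    b ∈ ({b | f a = f b} : Finset (Fin (n+1))) ↔ f a = f b := by simp

section RGFside
variable {n k : ℕ} {f : Fin (n+1) → ℕ}
  (hg : ∀ i : Fin (n+1), f i ≤ 1 + (univ.filter fun j' => j' < i).sup f)
  (hs : (univ : Finset (Fin (n+1))).sup f = k - 1)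
  (h0 : f 0 = 0) (hk : 1 ≤ k)

include hg h0 in
lemma rgf_reach : ∀ i : Fin (n+1), ∀ c, c ≤ f i → ∃ j, j ≤ i ∧ f j = c := by
  have key : ∀ v, ∀ i : Fin (n+1), i.val = v → ∀ c, c ≤ f i → ∃ j, j ≤ i ∧ f j = c := by
    intro v
    induction v using Nat.strong_induction_on with
    | _ v ih =>
      intro i hi c hc
      rcases eq_or_lt_of_le hc with heq | hlt
      · exact ⟨i, le_rfl, heq.symm⟩
      · by_cases hiz : i.val = 0
        · have : i = 0 := Fin.ext hiz
          rw [this, h0] at hlt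
          omega
        · have hne : (univ.filter fun j' => j' < i).Nonempty := by
            refine ⟨0, ?_⟩
            rw [mem_filter]
            exact ⟨mem_univ _, Fin.pos_iff_ne_zero.mpr (fun h => hiz (by rw [h]; rfl))⟩
          obtain ⟨b, hb, hsb⟩ := Finset.exists_mem_eq_sup _ hne f
          rw [mem_filter] at hb
          have hcb : c ≤ f b := by
            have := hg i
            rw [hsb] at this
            omega
          obtain ⟨j, hj, hfj⟩ := ih b.val (by rw [← hi]; exact hb.2) b rfl c hcb
          exact ⟨j, le_trans hj (le_of_lt hb.2), hfj⟩
  exact fun i => key i.val i rfl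

include hg hs h0 in
lemma rgf_surj : ∀ c ≤ k - 1, ∃ j, f j = c := by
  intro c hc
  obtain ⟨b, _, hsb⟩ := Finset.exists_mem_eq_sup univ univ_nonempty f
  have : c ≤ f b := by rw [← hsb, hs]; exact hc
  obtain ⟨j, _, hfj⟩ := rgf_reach hg h0 b c this
  exact ⟨j, hfj⟩

include hg hs hk in
lemma rgf_lt_k (i : Fin (n+1)) : f i < k := by
  have : f i ≤ (univ : Finset (Fin (n+1))).sup f := Finset.le_sup (mem_univ i)
  omega

include hg hs h0 hk in
lemma parts_eq_fibers :
    (Finpartition.ofSetoid (Setoid.ker f)).parts = (range k).image (fiber f) := by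
  rw [ker_parts]
  ext p
  simp only [Finset.mem_image, mem_univ, true_and, Finset.mem_range]
  constructor
  · rintro ⟨a, rfl⟩
    refine ⟨f a, rgf_lt_k hg hs hk a, ?_⟩
    ext b
    rw [mem_fiber, mem_ker_class]
    exact eq_comm
  · rintro ⟨c, hc, rfl⟩
    obtain ⟨a, ha⟩ := rgf_surj hg hs h0 c (by omega)
    refine ⟨a, ?_⟩
    ext b
    rw [mem_fiber, mem_ker_class, ha]
    exact eq_comm

include hg hs h0 hk in
lemma card_parts_ker :
    (Finpartition.ofSetoid (Setoid.ker f)).parts.card = k := by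
  rw [parts_eq_fibers hg hs h0 hk]
  rw [Finset.card_image_of_injOn, Finset.card_range]
  intro c1 hc1 c2 hc2 h
  rw [Finset.mem_coe, Finset.mem_range] at hc1 hc2
  obtain ⟨a, ha⟩ := rgf_surj hg hs h0 c1 (by omega)
  have h1 : a ∈ fiber f c1 := (mem_fiber f c1 a).mpr ha
  rw [h] at h1
  rw [mem_fiber] at h1
  omega

include hg hs h0 hk in
lemma ker_eq_of_fibers_eq {g : Fin (n+1) → ℕ}
    (hgg : ∀ i : Fin (n+1), g i ≤ 1 + (univ.filter fun j' => j' < i).sup g)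
    (hsg : (univ : Finset (Fin (n+1))).sup g = k - 1)
    (h0g : g 0 = 0)
    (hfib : (range k).image (fiber f) = (range k).image (fiber g)) :
    ∀ a b : Fin (n+1), f a = f b ↔ g a = g b := by
  have key : ∀ a, fiber f (f a) = fiber g (g a) := by
    intro a
    have h1 : fiber f (f a) ∈ (range k).image (fiber g) := by
      rw [← hfib]
      exact Finset.mem_image_of_mem _ (Finset.mem_range.mpr (rgf_lt_k hg hs hk a))
    rw [Finset.mem_image] at h1
    obtain ⟨c, _, hc⟩ := h1
    have ha : a ∈ fiber g c := by rw [hc]; exact (mem_fiber f (f a) a).mpr rfl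
    rw [mem_fiber] at ha
    rw [← hc, ha]
  intro a b
  have h1 : f a = f b ↔ b ∈ fiber f (f a) := by rw [mem_fiber]; exact eq_comm
  have h2 : g a = g b ↔ b ∈ fiber g (g a) := by rw [mem_fiber]; exact eq_comm
  rw [h1, h2, key a]

include hg hs h0 hk in
lemma rgf_ext {g : Fin (n+1) → ℕ}
    (hgg : ∀ i : Fin (n+1), g i ≤ 1 + (univ.filter fun j' => j' < i).sup g)
    (hsg : (univ : Finset (Fin (n+1))).sup g = k - 1)
    (h0g : g 0 = 0)
    (hker : ∀ a b : Fin (n+1), f a = f b ↔ g a = g b) : f = g := by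
  have key : ∀ v, ∀ i : Fin (n+1), i.val = v → f i = g i := by
    intro v
    induction v using Nat.strong_induction_on with
    | _ v ih =>
      intro i hi
      by_cases hex : ∃ j, j < i ∧ f i = f j
      · obtain ⟨j, hj, hfij⟩ := hex
        have hgij : g i = g j := (hker i j).mp hfij
        have hfg : f j = g j := ih j.val (by rw [← hi]; exact hj) j rfl
        rw [hfij, hgij, hfg]
      · push_neg at hex
        by_cases hiz : i.val = 0
        · have : i = 0 := Fin.ext hiz
          rw [this, h0, h0g]
        · have hne : (univ.filter fun j' => j' < i).Nonempty := by
            refine ⟨0, ?_⟩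
            rw [mem_filter]
            exact ⟨mem_univ _, Fin.pos_iff_ne_zero.mpr (fun h => hiz (by rw [h]; rfl))⟩
          have hgex : ∀ j, j < i → g i ≠ g j := fun j hj hgij => hex j hj ((hker i j).mpr hgij)
          have hpref : (univ.filter fun j' => j' < i).sup f
              = (univ.filter fun j' => j' < i).sup g := by
            apply Finset.sup_congr rfl
            intro b hb
            rw [mem_filter] at hb
            exact ih b.val (by rw [← hi]; exact hb.2) b rfl
          have hfi : f i = 1 + (univ.filter fun j' => j' < i).sup f := by
            refine le_antisymm (hg i) ?_
            by_contra hcon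
            push_neg at hcon
            have hle : f i ≤ (univ.filter fun j' => j' < i).sup f := by omega
            obtain ⟨b, hb, hsb⟩ := Finset.exists_mem_eq_sup _ hne f
            rw [mem_filter] at hb
            have : f i ≤ f b := by rw [← hsb]; exact hle
            obtain ⟨j, hj, hfj⟩ := rgf_reach hg h0 b (f i) this
            exact hex j (lt_of_le_of_lt hj hb.2) hfj.symm
          have hgi : g i = 1 + (univ.filter fun j' => j' < i).sup g := by
            refine le_antisymm (hgg i) ?_
            by_contra hcon
            push_neg at hcon
            have hle : g i ≤ (univ.filter fun j' => j' < i).sup g := by omega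
            obtain ⟨b, hb, hsb⟩ := Finset.exists_mem_eq_sup _ hne g
            rw [mem_filter] at hb
            have : g i ≤ g b := by rw [← hsb]; exact hle
            obtain ⟨j, hj, hfj⟩ := rgf_reach hgg h0g b (g i) this
            exact hgex j (lt_of_le_of_lt hj hb.2) hfj.symm
          rw [hfi, hgi, hpref]
  exact funext fun i => key i.val i rfl

end RGFside


set_option linter.unusedVariables false
set_option linter.unusedSectionVars false

lemma fibers_eq_parts {n k : ℕ} (P : Finpartition (univ : Finset (Fin (n+1))))
    (hP : P.parts.card = k) (hk : 1 ≤ k) :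
    (range k).image (fiber (pf P)) = P.parts := by
  have classeq : ∀ q ∈ P.parts, fiber (pf P) (prank P q) = q := by
    intro q hq
    ext b
    rw [mem_fiber]
    constructor
    · intro hb
      have : P.part b = q := prank_inj P (part_mem' P b) hq hb
      rw [← this]
      exact mem_part' P b
    · intro hb
      show prank P (P.part b) = prank P q
      rw [P.part_eq_of_mem hq hb]
  ext p
  rw [Finset.mem_image]
  constructor
  · rintro ⟨c, hc, rfl⟩
    rw [Finset.mem_range] at hc
    obtain ⟨q, hq, hrk⟩ := prank_surj P hP hk c hc
    rw [← hrk, classeq q hq]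
    exact hq
  · intro hp
    exact ⟨prank P p, Finset.mem_range.mpr (prank_lt_k P hP hk hp), classeq p hp⟩

lemma cond_zero_unfold {k n : ℕ} {f : Fin (n+1) → ℕ} (h : Cond k 0 f) :
    (∀ i : Fin (n+1), f i ≤ 1 + (univ.filter fun j' => j' < i).sup f) ∧
      (univ : Finset (Fin (n+1))).sup f = k - 1 := by
  obtain ⟨h1, h2⟩ := h
  exact ⟨fun i => by simpa [Nat.zero_max] using h1 i, by simpa [Nat.zero_max] using h2⟩

lemma cond_zero_fold {k n : ℕ} {f : Fin (n+1) → ℕ}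
    (h1 : ∀ i : Fin (n+1), f i ≤ 1 + (univ.filter fun j' => j' < i).sup f)
    (h2 : (univ : Finset (Fin (n+1))).sup f = k - 1) : Cond k 0 f := by
  exact ⟨fun i => by simpa [Nat.zero_max] using h1 i, by simpa [Nat.zero_max] using h2⟩

/-- The map from restricted growth functions to partitions. -/
noncomputable def Phi {n k : ℕ} (hk : 1 ≤ k)
    (f : {f : Fin (n+1) → ℕ // Cond k 0 f ∧ f 0 = 0}) :
    {P : Finpartition (univ : Finset (Fin (n+1))) // P.parts.card = k} :=
  ⟨Finpartition.ofSetoid (Setoid.ker f.1),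
    card_parts_ker (cond_zero_unfold f.2.1).1 (cond_zero_unfold f.2.1).2 f.2.2 hk⟩

lemma Phi_bijective {n k : ℕ} (hk : 1 ≤ k) : Function.Bijective (Phi (n := n) hk) := by
  constructor
  · rintro ⟨f, hf⟩ ⟨g, hg⟩ h
    have hparts : (Finpartition.ofSetoid (Setoid.ker f)).parts
        = (Finpartition.ofSetoid (Setoid.ker g)).parts := by
      have := congrArg Subtype.val h
      simp only [Phi] at this
      rw [this]
    obtain ⟨hgf, hsf⟩ := cond_zero_unfold hf.1
    obtain ⟨hgg, hsg⟩ := cond_zero_unfold hg.1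
    rw [parts_eq_fibers hgf hsf hf.2 hk, parts_eq_fibers hgg hsg hg.2 hk] at hparts
    have hker := ker_eq_of_fibers_eq hgf hsf hf.2 hk hgg hsg hg.2 hparts
    exact Subtype.ext (rgf_ext hgf hsf hf.2 hk hgg hsg hg.2 hker)
  · rintro ⟨P, hP⟩
    have hcond : Cond k 0 (pf P) := cond_zero_fold (pf_grow P hP hk) (pf_sup P hP hk)
    refine ⟨⟨pf P, hcond, pf_zero P⟩, ?_⟩
    apply Subtype.ext
    apply Finpartition.ext
    show (Finpartition.ofSetoid (Setoid.ker (pf P))).parts = P.parts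
    obtain ⟨hgf, hsf⟩ := cond_zero_unfold hcond
    rw [parts_eq_fibers hgf hsf (pf_zero P) hk]
    exact fibers_eq_parts P hP hk

/-- Equivalence between extension sequences (with `m = 0`) and full RGFs. -/
def consEquiv (k j : ℕ) :
    {x : Fin j → ℕ // Cond k 0 x} ≃ {f : Fin (j+1) → ℕ // Cond k 0 f ∧ f 0 = 0} where
  toFun x := ⟨Fin.cons 0 x.1, by
      have : Cond k (max 0 0) x.1 := by simpa using x.2
      exact cond_cons 0 (by omega) x.1 this, by simp⟩
  invFun f := ⟨Fin.tail f.1, by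
      have := cond_tail f.2.1
      rwa [f.2.2, Nat.max_self] at this⟩
  left_inv x := by
      apply Subtype.ext
      dsimp only
      funext t
      simp [Fin.tail, Fin.cons_succ]
  right_inv f := by
      apply Subtype.ext
      dsimp only
      funext i
      induction i using Fin.cases with
      | zero => rw [Fin.cons_zero, f.2.2]
      | succ t => rw [Fin.cons_succ]; rfl

/-- `E(j,m)` counts the sequences `(x_1,...,x_j)` which extend any
restricted-growth prefix with maximum `m` to a surjective restricted growth
function onto `{0,...,k-1}`; in particular `E(n-1,0) = S(n,k)`. -/
theorem stmt15 (k : ℕ) (hk : 1 ≤ k) :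
    (∀ j m : ℕ,
      Nat.card {x : Fin j → ℕ //
        (∀ i : Fin j,
          x i ≤ 1 + max m ((Finset.univ.filter fun j' => j' < i).sup x)) ∧
        max m (Finset.univ.sup x) = k - 1} = E k j m) ∧
    ∀ n : ℕ, 1 ≤ n → E k (n - 1) 0 = stirling n k := by
  constructor
  · intro j m
    exact card_cond k j m
  · intro n hn
    obtain ⟨j, rfl⟩ : ∃ j, n = j + 1 := ⟨n - 1, by omega⟩
    have hj : j + 1 - 1 = j := rfl
    rw [hj, ← card_cond k j 0]
    unfold stirling
    exact Nat.card_congr ((consEquiv k j).trans (Equiv.ofBijective _ (Phi_bijective hk)))
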